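/- Let α, β be irrational with α ± β ∉ ℤ, convergent denominators q_n (of α) and t_m (of β), partial quotients a_n of α, and suppose q_{n−1} ≤ t_{m−1} < q_n < t_m. Let C = √5(1 − √((√5−1)/2)) and define d(t) = 1/ψ_β(t) − 1/ψ_α(t). If |d(t)| < C t for all t ≥ t_{m−1}, then a_{n+1} = 1. -/

import Mathlib

noncomputable def dnint (x : ℝ) : ℝ := |x - round x|

noncomputable def psi (ξ t : ℝ) : ℝ :=
  sInf {v : ℝ | ∃ q : ℤ, 1 ≤ q ∧ (q : ℝ) ≤ t ∧ v = dnint ((q : ℝ) * ξ)}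

namespace CFaux

def cfA (a : ℕ → ℤ) : ℕ → ℤ
  | 0 => 1
  | 1 => a 0
  | (k+2) => a (k+1) * cfA a (k+1) + cfA a k

def cfB (a : ℕ → ℤ) : ℕ → ℤ
  | 0 => 0
  | 1 => 1
  | (k+2) => a (k+1) * cfB a (k+1) + cfB a k

variable {tl : ℕ → ℝ} {a : ℕ → ℤ}

lemma tl_irr (h0 : Irrational (tl 0))
    (htl : ∀ r, tl (r + 1) = (tl r - (⌊tl r⌋ : ℝ))⁻¹) :
    ∀ r, Irrational (tl r) := by
  intro r
  induction r with
  | zero => exact h0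
  | succ k ih => rw [htl]; exact (ih.sub_intCast _).inv

lemma tl_gt_one (h0 : Irrational (tl 0))
    (htl : ∀ r, tl (r + 1) = (tl r - (⌊tl r⌋ : ℝ))⁻¹) :
    ∀ r, 1 < tl (r + 1) := by
  intro r
  have hirr := tl_irr h0 htl r
  have h1 : tl r - (⌊tl r⌋ : ℝ) = Int.fract (tl r) := rfl
  have h2 : 0 < Int.fract (tl r) := by
    rcases lt_or_eq_of_le (Int.fract_nonneg (tl r)) with h | h
    · exact h
    · exfalso
      apply hirr.ne_int ⌊tl r⌋
      have : tl r - (⌊tl r⌋ : ℝ) = 0 := h.symm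
      linarith
  rw [htl, h1]
  exact (one_lt_inv₀ h2).mpr (Int.fract_lt_one _)


lemma fract_pos (h0 : Irrational (tl 0))
    (htl : ∀ r, tl (r + 1) = (tl r - (⌊tl r⌋ : ℝ))⁻¹) (r : ℕ) :
    0 < tl r - (⌊tl r⌋ : ℝ) := by
  have hirr := tl_irr h0 htl r
  rcases lt_or_eq_of_le (Int.fract_nonneg (tl r)) with h | h
  · exact h
  · exfalso
    apply hirr.ne_int ⌊tl r⌋
    have : tl r - (⌊tl r⌋ : ℝ) = 0 := h.symm
    linarith

/-- key multiplicative relation : (tl r - a r) * tl (r+1) = 1 -/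
lemma cf_mul (h0 : Irrational (tl 0))
    (htl : ∀ r, tl (r + 1) = (tl r - (⌊tl r⌋ : ℝ))⁻¹)
    (ha : ∀ r, a r = ⌊tl r⌋) (r : ℕ) :
    (tl r - (a r : ℝ)) * tl (r + 1) = 1 := by
  rw [ha, htl]
  exact mul_inv_cancel₀ (ne_of_gt (fract_pos h0 htl r))

lemma a_ge_one (h0 : Irrational (tl 0))
    (htl : ∀ r, tl (r + 1) = (tl r - (⌊tl r⌋ : ℝ))⁻¹)
    (ha : ∀ r, a r = ⌊tl r⌋) (r : ℕ) :
    1 ≤ a (r + 1) := by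
  rw [ha]
  exact Int.le_floor.mpr (by exact_mod_cast (tl_gt_one h0 htl r).le)

lemma tl_ge_a (ha : ∀ r, a r = ⌊tl r⌋) (r : ℕ) : (a r : ℝ) ≤ tl r := by
  rw [ha]; exact Int.floor_le _

lemma cfB_bounds (ha1 : ∀ r, 1 ≤ a (r + 1)) :
    ∀ k, 0 ≤ cfB a k ∧ 1 ≤ cfB a (k + 1) := by
  intro k
  induction k with
  | zero => simp [cfB]
  | succ k ih =>
    refine ⟨ih.2.trans' (by norm_num), ?_⟩
    show 1 ≤ a (k + 1) * cfB a (k + 1) + cfB a k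
    nlinarith [ha1 k, ih.1, ih.2]

lemma cf_det : ∀ k, cfA a (k + 1) * cfB a k - cfA a k * cfB a (k + 1) = (-1) ^ (k + 1) := by
  intro k
  induction k with
  | zero => simp [cfA, cfB]
  | succ k ih =>
    show (a (k+1) * cfA a (k+1) + cfA a k) * cfB a (k+1)
        - cfA a (k+1) * (a (k+1) * cfB a (k+1) + cfB a k) = (-1)^(k+2)
    have : ((-1:ℤ))^(k+2) = -(-1)^(k+1) := by ring
    rw [this]
    linarith [ih]

lemma cf_main (h0 : Irrational (tl 0))
    (htl : ∀ r, tl (r + 1) = (tl r - (⌊tl r⌋ : ℝ))⁻¹)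
    (ha : ∀ r, a r = ⌊tl r⌋) :
    ∀ k, tl 0 * (tl (k + 1) * (cfB a (k + 1) : ℝ) + (cfB a k : ℝ))
      = tl (k + 1) * (cfA a (k + 1) : ℝ) + (cfA a k : ℝ) := by
  intro k
  induction k with
  | zero =>
    have hm := cf_mul h0 htl ha 0
    show tl 0 * (tl 1 * ((1:ℤ):ℝ) + ((0:ℤ):ℝ)) = tl 1 * ((a 0:ℤ):ℝ) + ((1:ℤ):ℝ)
    push_cast
    linear_combination hm
  | succ k ih =>
    have hm := cf_mul h0 htl ha (k + 1)
    show tl 0 * (tl (k+2) * ((a (k+1) * cfB a (k+1) + cfB a k : ℤ):ℝ) + (cfB a (k+1) : ℝ))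
      = tl (k+2) * ((a (k+1) * cfA a (k+1) + cfA a k : ℤ):ℝ) + (cfA a (k+1) : ℝ)
    push_cast
    linear_combination tl (k+2) * ih + ((cfA a (k+1):ℝ) - tl 0 * (cfB a (k+1):ℝ)) * hm


lemma den_pos (h0 : Irrational (tl 0))
    (htl : ∀ r, tl (r + 1) = (tl r - (⌊tl r⌋ : ℝ))⁻¹)
    (ha : ∀ r, a r = ⌊tl r⌋) (k : ℕ) :
    0 < tl (k + 1) * (cfB a (k + 1) : ℝ) + (cfB a k : ℝ) := by
  have h1 := tl_gt_one h0 htl k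
  have h2 := cfB_bounds (a := a) (a_ge_one h0 htl ha) k
  have h3 : (1:ℝ) ≤ (cfB a (k+1) : ℝ) := by exact_mod_cast h2.2
  have h4 : (0:ℝ) ≤ (cfB a k : ℝ) := by exact_mod_cast h2.1
  nlinarith

lemma cf_err (h0 : Irrational (tl 0))
    (htl : ∀ r, tl (r + 1) = (tl r - (⌊tl r⌋ : ℝ))⁻¹)
    (ha : ∀ r, a r = ⌊tl r⌋) (k : ℕ) :
    ((cfB a (k + 1) : ℝ) * tl 0 - (cfA a (k + 1) : ℝ))
      * (tl (k + 1) * (cfB a (k + 1) : ℝ) + (cfB a k : ℝ)) = (-1) ^ k := by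
  have hmain := cf_main h0 htl ha k
  have hdet := congrArg (fun z : ℤ => (z : ℝ)) (cf_det (a := a) k)
  push_cast at hdet
  have hpow : ((-1:ℝ)) ^ (k+1) = -(-1)^k := by ring
  rw [hpow] at hdet
  linear_combination (cfB a (k+1) : ℝ) * hmain - hdet

/-- absolute value of the error, as reciprocal of the denominator -/
lemma cf_err_abs (h0 : Irrational (tl 0))
    (htl : ∀ r, tl (r + 1) = (tl r - (⌊tl r⌋ : ℝ))⁻¹)
    (ha : ∀ r, a r = ⌊tl r⌋) (k : ℕ) :
    |(cfB a (k + 1) : ℝ) * tl 0 - (cfA a (k + 1) : ℝ)|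
      = (tl (k + 1) * (cfB a (k + 1) : ℝ) + (cfB a k : ℝ))⁻¹ := by
  have he := cf_err h0 htl ha k
  have hd := den_pos h0 htl ha k
  have habs : |((cfB a (k + 1) : ℝ) * tl 0 - (cfA a (k + 1) : ℝ))
      * (tl (k + 1) * (cfB a (k + 1) : ℝ) + (cfB a k : ℝ))| = 1 := by
    rw [he, abs_pow, abs_neg, abs_one, one_pow]
  rw [abs_mul, abs_of_pos hd] at habs
  field_simp
  rw [eq_div_iff (by rw [mul_comm]; exact hd.ne')]; linear_combination habs


lemma abs_le_abs_add' {u v : ℝ} (h : 0 < u * v) : |u| ≤ |u + v| := by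
  rcases lt_trichotomy u 0 with hu | hu | hu
  · have hv : v < 0 := by nlinarith
    rw [abs_of_neg hu, abs_of_neg (by linarith : u + v < 0)]
    linarith
  · rw [hu] at h; simp at h
  · have hv : 0 < v := by nlinarith
    rw [abs_of_pos hu, abs_of_pos (by linarith : 0 < u + v)]
    linarith

/-- Best approximation property: any `1 ≤ c < B (k+2)` approximates no better
than the convergent denominator `B (k+1)`. -/
lemma cf_best (h0 : Irrational (tl 0))
    (htl : ∀ r, tl (r + 1) = (tl r - (⌊tl r⌋ : ℝ))⁻¹)
    (ha : ∀ r, a r = ⌊tl r⌋) (k : ℕ) (c p : ℤ)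
    (hc1 : 1 ≤ c) (hc2 : c < cfB a (k + 2)) :
    |(cfB a (k + 1) : ℝ) * tl 0 - (cfA a (k + 1) : ℝ)| ≤ |(c : ℝ) * tl 0 - (p : ℝ)| := by
  have ha1 := a_ge_one h0 htl ha
  have hB1 : 1 ≤ cfB a (k + 1) := (cfB_bounds (a := a) ha1 k).2
  have hB2 : 1 ≤ cfB a (k + 2) := (cfB_bounds (a := a) ha1 (k+1)).2
  have hε : ((-1:ℤ) ^ k) * ((-1) ^ k) = 1 := by
    rw [← pow_add]; exact Even.neg_one_pow ⟨k, rfl⟩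
  have hdet' : cfA a (k+2) * cfB a (k+1) - cfA a (k+1) * cfB a (k+2) = (-1) ^ k := by
    have h := cf_det (a := a) (k + 1)
    linear_combination h
  obtain ⟨x, y, hx, hp⟩ : ∃ x y : ℤ,
      x * cfB a (k+1) + y * cfB a (k+2) = c ∧ x * cfA a (k+1) + y * cfA a (k+2) = p := by
    refine ⟨(-1)^k * (c * cfA a (k+2) - p * cfB a (k+2)),
      (-1)^k * (p * cfB a (k+1) - c * cfA a (k+1)), ?_, ?_⟩
    · linear_combination ((-1:ℤ)^k * c) * hdet' + c * hε
    · linear_combination ((-1:ℤ)^k * p) * hdet' + p * hε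
  set e1 : ℝ := (cfB a (k + 1) : ℝ) * tl 0 - (cfA a (k + 1) : ℝ) with he1def
  set e2 : ℝ := (cfB a (k + 2) : ℝ) * tl 0 - (cfA a (k + 2) : ℝ) with he2def
  have hxR := congrArg (fun z : ℤ => (z : ℝ)) hx
  have hpR := congrArg (fun z : ℤ => (z : ℝ)) hp
  push_cast at hxR hpR
  have hres : (c : ℝ) * tl 0 - (p : ℝ) = (x : ℝ) * e1 + (y : ℝ) * e2 := by
    rw [he1def, he2def]; linear_combination hpR - tl 0 * hxR
  have he1 := cf_err h0 htl ha k
  have he2 : ((cfB a (k + 2) : ℝ) * tl 0 - (cfA a (k + 2) : ℝ))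
      * (tl (k + 2) * (cfB a (k + 2) : ℝ) + (cfB a (k + 1) : ℝ)) = (-1) ^ (k + 1) :=
    cf_err h0 htl ha (k + 1)
  have hd1 := den_pos h0 htl ha k
  have hd2 : 0 < tl (k + 2) * (cfB a (k + 2) : ℝ) + (cfB a (k + 1) : ℝ) :=
    den_pos h0 htl ha (k + 1)
  have hprod : e1 * e2 < 0 := by
    have h12 : (e1 * (tl (k + 1) * (cfB a (k + 1) : ℝ) + (cfB a k : ℝ)))
        * (e2 * (tl (k + 2) * (cfB a (k + 2) : ℝ) + (cfB a (k+1) : ℝ))) = -1 := by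
      rw [he1def, he2def, he1, he2, ← pow_add]
      have hodd : Odd (k + (k + 1)) := ⟨k, by ring⟩
      rw [hodd.neg_one_pow]
    nlinarith [mul_pos hd1 hd2]
  rcases eq_or_ne y 0 with hy | hy
  · -- y = 0 : c is a multiple of B (k+1)
    have hxc : x * cfB a (k+1) = c := by rw [hy] at hx; linarith
    have hx1 : 1 ≤ x := by
      by_contra hcon
      push_neg at hcon
      have t1 : x * cfB a (k+1) ≤ 0 :=
        mul_nonpos_of_nonpos_of_nonneg (by linarith) (by linarith)
      linarith
    rw [hres, hy]
    push_cast
    rw [zero_mul, add_zero, abs_mul]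
    have hxabs : (1:ℝ) ≤ |(x:ℝ)| := by
      rw [abs_of_pos (by exact_mod_cast hx1 : (0:ℝ) < (x:ℝ))]
      exact_mod_cast hx1
    nlinarith [abs_nonneg e1]
  · -- y ≠ 0 : then x and y have opposite signs
    have hxy : x * y < 0 := by
      rcases lt_or_gt_of_ne hy with hy' | hy'
      · -- y ≤ -1 ⇒ x ≥ 1
        have hx1 : 1 ≤ x := by
          by_contra hcon
          push_neg at hcon
          have t1 : x * cfB a (k+1) ≤ 0 :=
            mul_nonpos_of_nonpos_of_nonneg (by linarith) (by linarith)
          have t2 : y * cfB a (k+2) ≤ (-1) * cfB a (k+2) :=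
            mul_le_mul_of_nonneg_right (by linarith) (by linarith)
          linarith
        nlinarith
      · -- y ≥ 1 ⇒ x ≤ -1
        have hx1 : x ≤ -1 := by
          by_contra hcon
          push_neg at hcon
          have t1 : 0 ≤ x * cfB a (k+1) :=
            mul_nonneg (by linarith) (by linarith)
          have t2 : (1:ℤ) * cfB a (k+2) ≤ y * cfB a (k+2) :=
            mul_le_mul_of_nonneg_right (by linarith) (by linarith)
          linarith
        nlinarith
    have hxyR : ((x:ℝ)) * ((y:ℝ)) < 0 := by exact_mod_cast hxy
    have hab : 0 < ((x:ℝ) * e1) * ((y:ℝ) * e2) := by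
      have := mul_pos_of_neg_of_neg hxyR hprod
      nlinarith
    have hxne : x ≠ 0 := by
      intro h; rw [h] at hxy; simp at hxy
    have h1le : |e1| ≤ |(x:ℝ) * e1| := by
      rw [abs_mul]
      have hxabs : (1:ℝ) ≤ |(x:ℝ)| := by
        have := Int.one_le_abs hxne
        calc (1:ℝ) ≤ ((|x| : ℤ) : ℝ) := by exact_mod_cast this
        _ = |(x:ℝ)| := by push_cast; ring
      nlinarith [abs_nonneg e1]
    rw [hres]
    exact h1le.trans (abs_le_abs_add' hab)


lemma psi_le (ξ t : ℝ) (c : ℤ) (h1 : 1 ≤ c) (h2 : (c : ℝ) ≤ t) :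
    psi ξ t ≤ dnint ((c : ℝ) * ξ) :=
  csInf_le ⟨0, by rintro v ⟨q, _, _, rfl⟩; exact abs_nonneg _⟩ ⟨c, h1, h2, rfl⟩

lemma le_psi (ξ t v : ℝ) (ht : 1 ≤ t)
    (h : ∀ c : ℤ, 1 ≤ c → (c : ℝ) ≤ t → v ≤ dnint ((c : ℝ) * ξ)) : v ≤ psi ξ t :=
  le_csInf ⟨dnint (((1:ℤ) : ℝ) * ξ), ⟨1, le_refl _, by exact_mod_cast ht, rfl⟩⟩
    (by rintro b ⟨c, hc1, hc2, rfl⟩; exact h c hc1 hc2)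

lemma dnint_le (x : ℝ) (p : ℤ) : dnint x ≤ |x - (p : ℝ)| := round_le x p


lemma tail_calc (x1 x2 A1 A2 Qn Q1 Bn : ℝ)
    (hfrac : (x1 - A1) * x2 = 1) (hx2 : 1 < x2) (hge : A2 ≤ x2)
    (hrec : Q1 = A1 * Qn + Bn) (hQn : 1 ≤ Qn) (hQ1 : 1 ≤ Q1)
    (hkey : (x2 * Q1 + Qn) - (x1 * Qn + Bn) < Q1) : A2 < 2 := by
  have hstep : x1 - A1 < 1 := by nlinarith
  nlinarith [mul_lt_mul_of_pos_right hstep (show (0:ℝ) < Qn by linarith),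
    mul_le_mul_of_nonneg_right hge (show (0:ℝ) ≤ Q1 by linarith)]

end CFaux

open CFaux

set_option maxHeartbeats 1000000

/-- Lemma 4 (first part): if `q_{n-1} ≤ t_{m-1} < q_n < t_m` and
`|d(x)| < C x` for all `x ≥ t_{m-1}`, where `d(x) = 1/ψ_β(x) - 1/ψ_α(x)` and
`C = √5 (1 - √((√5-1)/2))`, then `a_{n+1} = 1`
(stated with `n, m` replaced by `n + 1, m + 1`). -/
theorem stmt_9 (α β : ℝ) (hα : Irrational α) (hβ : Irrational β)
    (hsum : ∀ k : ℤ, α + β ≠ (k : ℝ)) (hdiff : ∀ k : ℤ, α - β ≠ (k : ℝ))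
    (tlα : ℕ → ℝ) (aα : ℕ → ℤ) (q : ℕ → ℤ)
    (htlα0 : tlα 0 = α)
    (htlα : ∀ r, tlα (r + 1) = (tlα r - (⌊tlα r⌋ : ℝ))⁻¹)
    (haα : ∀ r, aα r = ⌊tlα r⌋)
    (hq0 : q 0 = 1) (hq1 : q 1 = aα 1)
    (hqrec : ∀ k, q (k + 2) = aα (k + 2) * q (k + 1) + q k)
    (tlβ : ℕ → ℝ) (aβ : ℕ → ℤ) (t : ℕ → ℤ)
    (htlβ0 : tlβ 0 = β)
    (htlβ : ∀ r, tlβ (r + 1) = (tlβ r - (⌊tlβ r⌋ : ℝ))⁻¹)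
    (haβ : ∀ r, aβ r = ⌊tlβ r⌋)
    (ht0 : t 0 = 1) (ht1 : t 1 = aβ 1)
    (htrec : ∀ k, t (k + 2) = aβ (k + 2) * t (k + 1) + t k)
    (n m : ℕ)
    (h1 : q n ≤ t m) (h2 : t m < q (n + 1)) (h3 : q (n + 1) < t (m + 1))
    (hd : ∀ x : ℝ, (t m : ℝ) ≤ x →
      |1 / psi β x - 1 / psi α x| <
        Real.sqrt 5 * (1 - Real.sqrt ((Real.sqrt 5 - 1) / 2)) * x) :
    aα (n + 2) = 1 := by
  have hirrα : Irrational (tlα 0) := by rw [htlα0]; exact hα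
  have hirrβ : Irrational (tlβ 0) := by rw [htlβ0]; exact hβ
  have haα1 : ∀ r, 1 ≤ aα (r + 1) := a_ge_one hirrα htlα haα
  have haβ1 : ∀ r, 1 ≤ aβ (r + 1) := a_ge_one hirrβ htlβ haβ
  -- identification of the recursive sequences with cfB
  have hqB : ∀ k, cfB aα (k + 1) = q k := by
    intro k
    induction k using Nat.twoStepInduction with
    | zero => show cfB aα 1 = q 0; rw [hq0]; rfl
    | one =>
      show cfB aα 2 = q 1
      show aα 1 * cfB aα 1 + cfB aα 0 = q 1
      show aα 1 * 1 + 0 = q 1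
      rw [hq1]; ring
    | more k ih1 ih2 =>
      show aα (k + 2) * cfB aα (k + 2) + cfB aα (k + 1) = q (k + 2)
      rw [ih1, ih2, hqrec]
  have htB : ∀ k, cfB aβ (k + 1) = t k := by
    intro k
    induction k using Nat.twoStepInduction with
    | zero => show cfB aβ 1 = t 0; rw [ht0]; rfl
    | one =>
      show cfB aβ 2 = t 1
      show aβ 1 * cfB aβ 1 + cfB aβ 0 = t 1
      show aβ 1 * 1 + 0 = t 1
      rw [ht1]; ring
    | more k ih1 ih2 =>
      show aβ (k + 2) * cfB aβ (k + 2) + cfB aβ (k + 1) = t (k + 2)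
      rw [ih1, ih2, htrec]
  have hq_ge : ∀ k, 1 ≤ q k := fun k => (hqB k) ▸ (cfB_bounds haα1 k).2
  have ht_ge : ∀ k, 1 ≤ t k := fun k => (htB k) ▸ (cfB_bounds haβ1 k).2
  have hBαn : 0 ≤ cfB aα n := (cfB_bounds haα1 n).1
  have hBβm : 0 ≤ cfB aβ m := (cfB_bounds haβ1 m).1
  have hidx : ∀ j : ℕ, j + 1 + 1 = j + 2 := fun j => rfl
  -- the three denominators
  set D1 : ℝ := tlα (n + 1) * ((q n : ℤ) : ℝ) + ((cfB aα n : ℤ) : ℝ) with hD1def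
  set D2 : ℝ := tlα (n + 2) * ((q (n + 1) : ℤ) : ℝ) + ((q n : ℤ) : ℝ) with hD2def
  set Dβ : ℝ := tlβ (m + 1) * ((t m : ℤ) : ℝ) + ((cfB aβ m : ℤ) : ℝ) with hDβdef
  have hD1pos : 0 < D1 := by
    have h := den_pos hirrα htlα haα n
    rwa [hqB n] at h
  have hD2pos : 0 < D2 := by
    have h := den_pos hirrα htlα haα (n + 1)
    rw [hidx, hqB (n + 1), hqB n] at h
    exact h
  have hDβpos : 0 < Dβ := by
    have h := den_pos hirrβ htlβ haβ m
    rwa [htB m] at h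
  -- error formulas
  have habs1 : |((q n : ℤ) : ℝ) * α - ((cfA aα (n + 1) : ℤ) : ℝ)| = D1⁻¹ := by
    have h := cf_err_abs hirrα htlα haα n
    rwa [htlα0, hqB n] at h
  have habs2 : |((q (n + 1) : ℤ) : ℝ) * α - ((cfA aα (n + 2) : ℤ) : ℝ)| = D2⁻¹ := by
    have h := cf_err_abs hirrα htlα haα (n + 1)
    rw [hidx, htlα0, hqB (n + 1), hqB n] at h
    exact h
  have habsβ : |((t m : ℤ) : ℝ) * β - ((cfA aβ (m + 1) : ℤ) : ℝ)| = Dβ⁻¹ := by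
    have h := cf_err_abs hirrβ htlβ haβ m
    rwa [htlβ0, htB m] at h
  -- real casts of hypotheses
  have h_tm1 : (1 : ℝ) ≤ ((t m : ℤ) : ℝ) := by exact_mod_cast ht_ge m
  have h_q11 : (1 : ℝ) ≤ ((q (n + 1) : ℤ) : ℝ) := by exact_mod_cast hq_ge (n + 1)
  -- ψ_α at t m : lower bound D1⁻¹
  have hψα_tm : D1⁻¹ ≤ psi α (t m) := by
    apply le_psi _ _ _ h_tm1
    intro c hc1 hc2
    have hclt : c < cfB aα (n + 2) := by
      rw [hqB (n + 1)]
      have : c ≤ t m := by exact_mod_cast hc2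
      omega
    have hb := cf_best hirrα htlα haα n c (round ((c : ℝ) * α)) hc1 hclt
    rw [htlα0, hqB n] at hb
    show D1⁻¹ ≤ |(c : ℝ) * α - ((round ((c : ℝ) * α) : ℤ) : ℝ)|
    rw [← habs1]
    exact hb
  have hψα_tm_pos : 0 < psi α (t m) := lt_of_lt_of_le (inv_pos.mpr hD1pos) hψα_tm
  have h1α : 1 / psi α (t m) ≤ D1 := by
    rw [div_le_iff₀ hψα_tm_pos]
    calc (1 : ℝ) = D1 * D1⁻¹ := (mul_inv_cancel₀ hD1pos.ne').symm
      _ ≤ D1 * psi α (t m) := by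
        exact mul_le_mul_of_nonneg_left hψα_tm hD1pos.le
  -- ψ_α at q (n+1) : equals D2⁻¹ (we need both bounds)
  have hψα_q_le : psi α ((q (n + 1) : ℤ) : ℝ) ≤ D2⁻¹ := by
    have hle := psi_le α ((q (n + 1) : ℤ) : ℝ) (q (n + 1)) (hq_ge (n + 1)) le_rfl
    have hr : dnint (((q (n + 1) : ℤ) : ℝ) * α) ≤ D2⁻¹ := by
      rw [← habs2]
      exact dnint_le _ _
    exact hle.trans hr
  have hq12 : q (n + 1) < q (n + 2) := by
    nlinarith [hqrec n, haα1 (n + 1), hq_ge n, hq_ge (n + 1)]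
  have hψα_q_ge : D2⁻¹ ≤ psi α ((q (n + 1) : ℤ) : ℝ) := by
    apply le_psi _ _ _ h_q11
    intro c hc1 hc2
    have hclt : c < cfB aα (n + 3) := by
      rw [show n + 3 = (n + 2) + 1 from rfl, hqB (n + 2)]
      have : c ≤ q (n + 1) := by exact_mod_cast hc2
      omega
    have hb := cf_best hirrα htlα haα (n + 1) c (round ((c : ℝ) * α)) hc1 hclt
    rw [hidx, htlα0, hqB (n + 1)] at hb
    show D2⁻¹ ≤ |(c : ℝ) * α - ((round ((c : ℝ) * α) : ℤ) : ℝ)|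
    rw [← habs2]
    exact hb
  have hψα_q_pos : 0 < psi α ((q (n + 1) : ℤ) : ℝ) :=
    lt_of_lt_of_le (inv_pos.mpr hD2pos) hψα_q_ge
  have h2α : D2 ≤ 1 / psi α ((q (n + 1) : ℤ) : ℝ) := by
    rw [le_div_iff₀ hψα_q_pos]
    calc D2 * psi α ((q (n + 1) : ℤ) : ℝ) ≤ D2 * D2⁻¹ :=
        mul_le_mul_of_nonneg_left hψα_q_le hD2pos.le
      _ = 1 := mul_inv_cancel₀ hD2pos.ne'
  -- ψ_β at t m : equals Dβ⁻¹
  have hψβ_tm_le : psi β ((t m : ℤ) : ℝ) ≤ Dβ⁻¹ := by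
    have hle := psi_le β ((t m : ℤ) : ℝ) (t m) (ht_ge m) le_rfl
    have hr : dnint (((t m : ℤ) : ℝ) * β) ≤ Dβ⁻¹ := by
      rw [← habsβ]
      exact dnint_le _ _
    exact hle.trans hr
  have hψβ_tm_ge : Dβ⁻¹ ≤ psi β ((t m : ℤ) : ℝ) := by
    apply le_psi _ _ _ h_tm1
    intro c hc1 hc2
    have hclt : c < cfB aβ (m + 2) := by
      rw [htB (m + 1)]
      have hc : c ≤ t m := by exact_mod_cast hc2
      have : t m < t (m + 1) := by
        nlinarith [htrec m, haβ1 (m + 1), ht_ge m, ht_ge (m + 1)]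
      omega
    have hb := cf_best hirrβ htlβ haβ m c (round ((c : ℝ) * β)) hc1 hclt
    rw [htlβ0, htB m] at hb
    show Dβ⁻¹ ≤ |(c : ℝ) * β - ((round ((c : ℝ) * β) : ℤ) : ℝ)|
    rw [← habsβ]
    exact hb
  have hψβ_tm_pos : 0 < psi β ((t m : ℤ) : ℝ) :=
    lt_of_lt_of_le (inv_pos.mpr hDβpos) hψβ_tm_ge
  have h1β : Dβ ≤ 1 / psi β ((t m : ℤ) : ℝ) := by
    rw [le_div_iff₀ hψβ_tm_pos]
    calc Dβ * psi β ((t m : ℤ) : ℝ) ≤ Dβ * Dβ⁻¹ :=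
        mul_le_mul_of_nonneg_left hψβ_tm_le hDβpos.le
      _ = 1 := mul_inv_cancel₀ hDβpos.ne'
  -- ψ_β at q (n+1) : lower bound Dβ⁻¹
  have hψβ_q_ge : Dβ⁻¹ ≤ psi β ((q (n + 1) : ℤ) : ℝ) := by
    apply le_psi _ _ _ h_q11
    intro c hc1 hc2
    have hclt : c < cfB aβ (m + 2) := by
      rw [htB (m + 1)]
      have : c ≤ q (n + 1) := by exact_mod_cast hc2
      omega
    have hb := cf_best hirrβ htlβ haβ m c (round ((c : ℝ) * β)) hc1 hclt
    rw [htlβ0, htB m] at hb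
    show Dβ⁻¹ ≤ |(c : ℝ) * β - ((round ((c : ℝ) * β) : ℤ) : ℝ)|
    rw [← habsβ]
    exact hb
  have hψβ_q_pos : 0 < psi β ((q (n + 1) : ℤ) : ℝ) :=
    lt_of_lt_of_le (inv_pos.mpr hDβpos) hψβ_q_ge
  have h2β : 1 / psi β ((q (n + 1) : ℤ) : ℝ) ≤ Dβ := by
    rw [div_le_iff₀ hψβ_q_pos]
    calc (1 : ℝ) = Dβ⁻¹ * Dβ := (inv_mul_cancel₀ hDβpos.ne').symm
      _ ≤ psi β ((q (n + 1) : ℤ) : ℝ) * Dβ :=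
        mul_le_mul_of_nonneg_right hψβ_q_ge hDβpos.le
      _ = Dβ * psi β ((q (n + 1) : ℤ) : ℝ) := mul_comm _ _
  -- the upper bound from hd
  have hd1 := hd ((t m : ℤ) : ℝ) le_rfl
  have hd2 := hd ((q (n + 1) : ℤ) : ℝ) (by exact_mod_cast h2.le)
  have habs_lt1 := abs_lt.mp hd1
  have habs_lt2 := abs_lt.mp hd2
  set C : ℝ := Real.sqrt 5 * (1 - Real.sqrt ((Real.sqrt 5 - 1) / 2)) with hCdef
  have hCpos : 0 < C := by
    nlinarith [abs_nonneg (1 / psi β ((t m : ℤ) : ℝ) - 1 / psi α ((t m : ℤ) : ℝ)),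
      habs_lt1.2, h_tm1]
  have hChalf : C < 1 / 2 := by
    rw [hCdef]
    have hs0 : (0:ℝ) ≤ Real.sqrt 5 := Real.sqrt_nonneg 5
    have hs : Real.sqrt 5 ^ 2 = 5 := Real.sq_sqrt (by norm_num)
    have hs2 : (2:ℝ) ≤ Real.sqrt 5 := by nlinarith
    have harg : (0:ℝ) ≤ (Real.sqrt 5 - 1) / 2 := by linarith
    have hu0 : (0:ℝ) ≤ Real.sqrt ((Real.sqrt 5 - 1) / 2) := Real.sqrt_nonneg _
    have hu : Real.sqrt ((Real.sqrt 5 - 1) / 2) ^ 2 = (Real.sqrt 5 - 1) / 2 :=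
      Real.sq_sqrt harg
    nlinarith [sq_nonneg (Real.sqrt ((Real.sqrt 5 - 1) / 2) - 0.7862),
      sq_nonneg (Real.sqrt 5 - 2.2361), sq_nonneg (Real.sqrt 5 - 2.236),
      mul_nonneg hs0 hu0]
  have htmq : ((t m : ℤ) : ℝ) ≤ ((q (n + 1) : ℤ) : ℝ) := by exact_mod_cast h2.le
  -- key inequality : D2 - D1 < q (n+1)
  have hkey : D2 - D1 < ((q (n + 1) : ℤ) : ℝ) := by
    have hub : D2 - D1 < C * ((t m : ℤ) : ℝ) + C * ((q (n + 1) : ℤ) : ℝ) := by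
      linarith [habs_lt1.2, habs_lt2.1, h1α, h2α, h1β, h2β]
    nlinarith [hub, hCpos, hChalf, htmq, h_q11]
  -- lower bound on D2 - D1
  have hfrac : (tlα (n + 1) - ((aα (n + 1) : ℤ) : ℝ)) * tlα (n + 2) = 1 := by
    have h := cf_mul hirrα htlα haα (n + 1)
    rwa [hidx] at h
  have hgt2 : 1 < tlα (n + 2) := by
    have h := tl_gt_one hirrα htlα (n + 1)
    rwa [hidx] at h
  have hge2 : ((aα (n + 2) : ℤ) : ℝ) ≤ tlα (n + 2) := tl_ge_a haα (n + 2)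
  have hrecq : q (n + 1) = aα (n + 1) * q n + cfB aα n := by
    rw [← hqB (n + 1), ← hqB n]; rfl
  have hrecqR : ((q (n + 1) : ℤ) : ℝ)
      = ((aα (n + 1) : ℤ) : ℝ) * ((q n : ℤ) : ℝ) + ((cfB aα n : ℤ) : ℝ) := by
    exact_mod_cast congrArg (fun z : ℤ => (z : ℝ)) hrecq
  have ha2lt : ((aα (n + 2) : ℤ) : ℝ) < 2 := by
    refine tail_calc (tlα (n + 1)) (tlα (n + 2)) ((aα (n + 1) : ℤ) : ℝ)
      ((aα (n + 2) : ℤ) : ℝ) ((q n : ℤ) : ℝ) ((q (n + 1) : ℤ) : ℝ)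
      ((cfB aα n : ℤ) : ℝ) hfrac hgt2 hge2 hrecqR ?_ h_q11 ?_
    · exact_mod_cast hq_ge n
    · rw [hD1def, hD2def] at hkey; linarith [hkey]
  have ha2 : aα (n + 2) < 2 := by exact_mod_cast ha2lt
  have h1a : 1 ≤ aα (n + 2) := haα1 (n + 1)
  omega
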